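/- arXiv:2604.09131 — 8 statements merged into one kernel-verified Lean document; each statement's English description precedes it below -/
import Mathlib

section
/- Let (f, C) be a constrained multiobjective problem with f : ℝ^n → ℝ^m and feasible set C ⊆ ℝ^n, whose Pareto set PS(f, C) is non-empty, and assume (f, C) satisfies the domination property. Let K be any set with PS(f, C) ⊆ K ⊆ C. Then PS(f, C) = ND^{(f,C)}(K), i.e., the Pareto set equals the set of points of K that are not dominated by any point of K. -/
open Matrix Set

/-- `y` dominates `x` w.r.t. the vector objective `f`. -/
def Dominates {α : Type*} {m : ℕ} (f : α → Fin m → ℝ) (y x : α) : Prop :=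
  (∀ i, f y i ≤ f x i) ∧ ∃ j, f y j < f x j

/-- The Pareto set of the constrained multiobjective problem `(f, C)`. -/
def ParetoSet {α : Type*} {m : ℕ} (f : α → Fin m → ℝ) (C : Set α) : Set α :=
  {x | x ∈ C ∧ ¬ ∃ y ∈ C, Dominates f y x}

/-- Non-dominated feasible points of `S` for the problem `(f, C)`. -/
def ND {α : Type*} {m : ℕ} (f : α → Fin m → ℝ) (C S : Set α) : Set α :=
  {x | x ∈ S ∩ C ∧ ¬ ∃ y ∈ S ∩ C, Dominates f y x}

/-- The domination property for the problem `(f, C)`. -/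
def DominationProperty {α : Type*} {m : ℕ} (f : α → Fin m → ℝ) (C : Set α) : Prop :=
  ∀ x ∈ C \ ParetoSet f C, ∃ z ∈ ParetoSet f C, Dominates f z x

theorem stmt_9 {n m : ℕ} (f : (Fin n → ℝ) → Fin m → ℝ) (C K : Set (Fin n → ℝ))
    (hne : (ParetoSet f C).Nonempty) (hdom : DominationProperty f C)
    (hK1 : ParetoSet f C ⊆ K) (hK2 : K ⊆ C) :
    ParetoSet f C = ND f C K := by
  ext x
  constructor
  · rintro ⟨hxC, hnd⟩
    exact ⟨⟨hK1 ⟨hxC, hnd⟩, hxC⟩, fun ⟨y, ⟨_, hyC⟩, hd⟩ => hnd ⟨y, hyC, hd⟩⟩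
  · rintro ⟨⟨hxK, hxC⟩, hnd⟩
    by_contra hnp
    obtain ⟨z, hz, hd⟩ := hdom x ⟨hxC, hnp⟩
    exact hnd ⟨z, ⟨hK1 hz, hz.1⟩, hd⟩
end

section
/- Let (f, C) be a constrained multiobjective problem with f : ℝ^n → ℝ^m and feasible set C ⊆ ℝ^n. Assume there exist y ∈ C and r > 0 such that y dominates every point of C \ B(y, r), where B(y, r) is the closed ball centered at y with radius r. Then PS(f, C) = PS(f, C ∩ B(y, r)). -/
open Matrix Set

theorem stmt_10 {n m : ℕ} (f : EuclideanSpace ℝ (Fin n) → Fin m → ℝ)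
    (C : Set (EuclideanSpace ℝ (Fin n))) (y : EuclideanSpace ℝ (Fin n)) (r : ℝ)
    (hy : y ∈ C) (hr : 0 < r)
    (hdom : ∀ x ∈ C \ Metric.closedBall y r, Dominates f y x) :
    ParetoSet f C = ParetoSet f (C ∩ Metric.closedBall y r) := by
  have hyball : y ∈ C ∩ Metric.closedBall y r :=
    ⟨hy, Metric.mem_closedBall_self hr.le⟩
  ext x
  constructor
  · rintro ⟨hxC, hnd⟩
    have hxball : x ∈ Metric.closedBall y r := by
      by_contra hx
      exact hnd ⟨y, hy, hdom x ⟨hxC, hx⟩⟩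
    exact ⟨⟨hxC, hxball⟩, fun ⟨z, hz, hd⟩ => hnd ⟨z, hz.1, hd⟩⟩
  · rintro ⟨⟨hxC, hxball⟩, hnd⟩
    refine ⟨hxC, ?_⟩
    rintro ⟨z, hzC, hle, j, hj⟩
    by_cases hz : z ∈ Metric.closedBall y r
    · exact hnd ⟨z, ⟨hzC, hz⟩, hle, j, hj⟩
    · obtain ⟨hle', j', hj'⟩ := hdom z ⟨hzC, hz⟩
      exact hnd ⟨y, hyball, fun i => (hle' i).trans (hle i), j', hj'.trans_le (hle j')⟩
end

section
/- Let (f, C) be a constrained multiobjective problem with non-empty closed feasible set C ⊆ ℝ^n, where each objective is a multipeak function f_k(x) = min_{j=1,...,s_k} ((x − c_{k,j})ᵀ H_{k,j} (x − c_{k,j}) + v_{k,j}) with each H_{k,j} symmetric positive definite. Then (f, C) satisfies the domination property: for every x ∈ C that is not Pareto-optimal, there exists a Pareto-optimal z ∈ C dominating x. -/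
open Matrix Set

lemma cont_quad {n : ℕ} (M : Matrix (Fin n) (Fin n) ℝ) (c : Fin n → ℝ) (v : ℝ) :
    Continuous (fun z : Fin n → ℝ => (z - c) ⬝ᵥ (M *ᵥ (z - c)) + v) := by
  simp only [dotProduct, Matrix.mulVec, Pi.sub_apply]
  refine Continuous.add ?_ continuous_const
  refine continuous_finset_sum _ fun i _ => Continuous.mul ((continuous_apply i).sub continuous_const) ?_
  exact continuous_finset_sum _ fun j _ =>
    continuous_const.mul ((continuous_apply j).sub continuous_const)

lemma quad_homog {n : ℕ} (M : Matrix (Fin n) (Fin n) ℝ) (a : ℝ) (z : Fin n → ℝ) :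
    (a • z) ⬝ᵥ (M *ᵥ (a • z)) = a ^ 2 * (z ⬝ᵥ (M *ᵥ z)) := by
  rw [Matrix.mulVec_smul, smul_dotProduct, dotProduct_smul, smul_eq_mul, smul_eq_mul]
  ring

lemma quad_lb {n : ℕ} {M : Matrix (Fin n) (Fin n) ℝ} (hM : M.PosDef) :
    ∃ ε > 0, ∀ z : Fin n → ℝ, ε * ‖z‖ ^ 2 ≤ z ⬝ᵥ (M *ᵥ z) := by
  have hpos : ∀ z : Fin n → ℝ, z ≠ 0 → 0 < z ⬝ᵥ (M *ᵥ z) := by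
    intro z hz; simpa using hM.dotProduct_mulVec_pos hz
  rcases Nat.eq_zero_or_pos n with h0 | hn
  · refine ⟨1, one_pos, fun z => ?_⟩
    subst h0
    have : z = 0 := Subsingleton.elim _ _
    rw [this, norm_zero]
    simp
  · have : Nonempty (Fin n) := ⟨⟨0, hn⟩⟩
    have hsne : (Metric.sphere (0 : Fin n → ℝ) 1).Nonempty :=
      NormedSpace.sphere_nonempty.2 zero_le_one
    have hg : Continuous (fun z : Fin n → ℝ => z ⬝ᵥ (M *ᵥ z)) := by
      have := cont_quad M 0 0
      simpa using this
    obtain ⟨z0, hz0, hmin⟩ := (isCompact_sphere (0 : Fin n → ℝ) 1).exists_isMinOn hsne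
      hg.continuousOn
    have hz0norm : ‖z0‖ = 1 := by simpa using hz0
    have hz0ne : z0 ≠ 0 := by
      intro h; rw [h] at hz0norm; simp at hz0norm
    refine ⟨z0 ⬝ᵥ (M *ᵥ z0), hpos z0 hz0ne, fun z => ?_⟩
    rcases eq_or_ne z 0 with rfl | hz
    · simp
    · set u : Fin n → ℝ := ‖z‖⁻¹ • z with hu
      have hnz : ‖z‖ ≠ 0 := norm_ne_zero_iff.2 hz
      have hun : ‖u‖ = 1 := by
        rw [hu, norm_smul]; simp [abs_of_nonneg (inv_nonneg.2 (norm_nonneg z)), inv_mul_cancel₀ hnz]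
      have humem : u ∈ Metric.sphere (0 : Fin n → ℝ) 1 := by simpa using hun
      have hle : z0 ⬝ᵥ (M *ᵥ z0) ≤ u ⬝ᵥ (M *ᵥ u) := hmin humem
      have hq0 : u ⬝ᵥ (M *ᵥ u) = ‖z‖⁻¹ ^ 2 * (z ⬝ᵥ (M *ᵥ z)) := by
        rw [hu, quad_homog]
      have hq : z ⬝ᵥ (M *ᵥ z) = ‖z‖ ^ 2 * (u ⬝ᵥ (M *ᵥ u)) := by
        rw [hq0]; field_simp
      rw [hq]
      nlinarith [hle, sq_nonneg ‖z‖]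

theorem stmt_11 {n m : ℕ} (s : Fin m → ℕ) (hs : ∀ k, 0 < s k)
    (c : (k : Fin m) → Fin (s k) → Fin n → ℝ)
    (v : (k : Fin m) → Fin (s k) → ℝ)
    (H : (k : Fin m) → Fin (s k) → Matrix (Fin n) (Fin n) ℝ)
    (hH : ∀ k j, (H k j).PosDef)
    (f : (Fin n → ℝ) → Fin m → ℝ)
    (hf : ∀ x k, f x k = ⨅ j, ((x - c k j) ⬝ᵥ (H k j *ᵥ (x - c k j)) + v k j))
    (C : Set (Fin n → ℝ)) (hCne : C.Nonempty) (hCclosed : IsClosed C) :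
    DominationProperty f C := by
  -- continuity of each objective
  have hne : ∀ k : Fin m, Nonempty (Fin (s k)) := fun k => ⟨⟨0, hs k⟩⟩
  have hfc : ∀ k, Continuous (fun y => f y k) := by
    intro k
    have := hne k
    have heq : (fun y => f y k) = fun y =>
        Finset.univ.inf' Finset.univ_nonempty
          (fun j => (y - c k j) ⬝ᵥ (H k j *ᵥ (y - c k j)) + v k j) := by
      funext y
      rw [hf y k, Finset.inf'_univ_eq_ciInf]
    rw [heq]
    exact Continuous.finset_inf'_apply Finset.univ_nonempty
      (fun j _ => cont_quad (H k j) (c k j) (v k j))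
  -- sum of objectives is strictly decreased by domination
  have sum_lt : ∀ a b, Dominates f a b → ∑ i, f a i < ∑ i, f b i := by
    rintro a b ⟨hle, j, hj⟩
    exact Finset.sum_lt_sum (fun i _ => hle i) ⟨j, Finset.mem_univ j, hj⟩
  intro x hx
  obtain ⟨hxC, hxnp⟩ := hx
  have hex : ∃ y ∈ C, Dominates f y x := by
    by_contra h
    exact hxnp ⟨hxC, h⟩
  obtain ⟨y0, hy0C, hy0dom⟩ := hex
  obtain ⟨j0, _⟩ := hy0dom.2
  -- the restricted set D
  set D : Set (Fin n → ℝ) := C ∩ ⋂ i, {y | f y i ≤ f x i} with hD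
  have hxD : x ∈ D := ⟨hxC, Set.mem_iInter.2 fun i => le_refl (f x i)⟩
  have hDsub : ∀ y ∈ D, ∀ i, f y i ≤ f x i := by
    intro y hy i
    exact Set.mem_iInter.1 hy.2 i
  have hDclosed : IsClosed D :=
    hCclosed.inter (isClosed_iInter fun i => isClosed_le (hfc i) continuous_const)
  -- boundedness via coercivity
  have := hne j0
  choose ε hε using fun j => quad_lb (hH j0 j)
  set t := f x j0 with ht
  set R : Fin (s j0) → ℝ :=
    fun j => ‖c j0 j‖ + Real.sqrt ((t - v j0 j) / ε j) with hR
  have hsub : {y : Fin n → ℝ | f y j0 ≤ t} ⊆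
      Metric.closedBall 0 (Finset.univ.sup' Finset.univ_nonempty R) := by
    intro y hy
    obtain ⟨j, hj⟩ := exists_eq_ciInf_of_finite
      (f := fun j => (y - c j0 j) ⬝ᵥ (H j0 j *ᵥ (y - c j0 j)) + v j0 j)
    have hqle : (y - c j0 j) ⬝ᵥ (H j0 j *ᵥ (y - c j0 j)) + v j0 j ≤ t := by
      rw [hj, ← hf y j0]; exact hy
    obtain ⟨hεpos, hεlb⟩ := hε j
    have h1 : ε j * ‖y - c j0 j‖ ^ 2 ≤ t - v j0 j := by
      have := hεlb (y - c j0 j); linarith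
    have h2 : ‖y - c j0 j‖ ^ 2 ≤ (t - v j0 j) / ε j :=
      (le_div_iff₀ hεpos).2 (by linarith [h1])
    have h3 : ‖y - c j0 j‖ ≤ Real.sqrt ((t - v j0 j) / ε j) :=
      Real.le_sqrt_of_sq_le h2
    have h4 : ‖y‖ ≤ R j := by
      have : ‖y‖ ≤ ‖y - c j0 j‖ + ‖c j0 j‖ := by
        calc ‖y‖ = ‖(y - c j0 j) + c j0 j‖ := by ring_nf
          _ ≤ ‖y - c j0 j‖ + ‖c j0 j‖ := norm_add_le _ _
      rw [hR]; dsimp only; linarith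
    rw [mem_closedBall_zero_iff]
    exact h4.trans (Finset.le_sup' R (Finset.mem_univ j))
  have hDcp : IsCompact D := by
    refine (isCompact_closedBall (0 : Fin n → ℝ)
      (Finset.univ.sup' Finset.univ_nonempty R)).of_isClosed_subset hDclosed ?_
    intro y hy
    exact hsub (hDsub y hy j0)
  -- minimize the sum over D
  have hg : Continuous (fun y : Fin n → ℝ => ∑ i, f y i) :=
    continuous_finset_sum _ fun i _ => hfc i
  obtain ⟨z, hzD, hzmin⟩ := hDcp.exists_isMinOn ⟨x, hxD⟩ hg.continuousOn
  have hzC : z ∈ C := hzD.1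
  have hzle : ∀ i, f z i ≤ f x i := hDsub z hzD
  -- z is Pareto optimal
  have hzP : z ∈ ParetoSet f C := by
    refine ⟨hzC, ?_⟩
    rintro ⟨y, hyC, hydom⟩
    have hyD : y ∈ D := ⟨hyC, Set.mem_iInter.2 fun i => (hydom.1 i).trans (hzle i)⟩
    have h1 : ∑ i, f z i ≤ ∑ i, f y i := hzmin hyD
    have h2 : ∑ i, f y i < ∑ i, f z i := sum_lt y z hydom
    linarith
  refine ⟨z, hzP, hzle, ?_⟩
  -- strict inequality in some coordinate
  have hy0D : y0 ∈ D := ⟨hy0C, Set.mem_iInter.2 fun i => hy0dom.1 i⟩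
  have h1 : ∑ i, f z i ≤ ∑ i, f y0 i := hzmin hy0D
  have h2 : ∑ i, f y0 i < ∑ i, f x i := sum_lt y0 x hy0dom
  by_contra hcon
  push_neg at hcon
  have : ∑ i, f x i ≤ ∑ i, f z i := Finset.sum_le_sum fun i _ => hcon i
  linarith
end

section
/- Consider a bi-objective multipeak problem with objectives f_a(x) = min_{i=1,...,k_a} f_{a_i}(x) and f_b(x) = min_{j=1,...,k_b} f_{b_j}(x), where f_{a_i}, f_{b_j} : ℝ^n → ℝ, and a non-empty feasible set C ⊆ ℝ^n (possibly C = ℝ^n). Then every Pareto-optimal point x* of the problem ((f_a, f_b), C) belongs to some pairwise Pareto set: PS((f_a, f_b), C) ⊆ ⋃_{i,j} PS((f_{a_i}, f_{b_j}), C). -/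
open Matrix Set

theorem stmt_13 {n ka kb : ℕ} (hka : 0 < ka) (hkb : 0 < kb)
    (fa : Fin ka → (Fin n → ℝ) → ℝ) (fb : Fin kb → (Fin n → ℝ) → ℝ)
    (C : Set (Fin n → ℝ)) (hC : C.Nonempty) :
    ParetoSet (fun x => ![⨅ i, fa i x, ⨅ j, fb j x]) C ⊆
      ⋃ i, ⋃ j, ParetoSet (fun x => ![fa i x, fb j x]) C := by
  intro x hx
  obtain ⟨hxC, hnd⟩ := hx
  haveI : Nonempty (Fin ka) := ⟨⟨0, hka⟩⟩
  haveI : Nonempty (Fin kb) := ⟨⟨0, hkb⟩⟩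
  obtain ⟨i, hi⟩ := exists_eq_ciInf_of_finite (f := fun i => fa i x)
  obtain ⟨j, hj⟩ := exists_eq_ciInf_of_finite (f := fun j => fb j x)
  refine mem_iUnion.2 ⟨i, mem_iUnion.2 ⟨j, hxC, ?_⟩⟩
  rintro ⟨y, hyC, hle, k, hk⟩
  have ha : (⨅ i, fa i y) ≤ fa i x := le_trans (ciInf_le (Finite.bddBelow_range _) i) (hle 0)
  have hb : (⨅ j, fb j y) ≤ fb j x := le_trans (ciInf_le (Finite.bddBelow_range _) j) (hle 1)
  apply hnd
  refine ⟨y, hyC, ?_, ?_⟩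
  · intro m
    fin_cases m
    · simpa [← hi] using ha
    · simpa [← hj] using hb
  · fin_cases k
    · exact ⟨0, by simpa [← hi] using lt_of_le_of_lt (ciInf_le (Finite.bddBelow_range _) i) hk⟩
    · exact ⟨1, by simpa [← hj] using lt_of_le_of_lt (ciInf_le (Finite.bddBelow_range _) j) hk⟩
end

section
/- Consider a bi-objective multipeak problem with objectives f_a(x) = min_{i=1,...,k_a} f_{a_i}(x) and f_b(x) = min_{j=1,...,k_b} f_{b_j}(x) and a non-empty feasible set C ⊆ ℝ^n, and assume the problem ((f_a, f_b), C) satisfies the domination property. Then PS((f_a, f_b), C) = ND^{((f_a,f_b),C)}( ⋃_{i,j} PS((f_{a_i}, f_{b_j}), C) ): the Pareto set of the multipeak problem equals the set of points of the union of the pairwise Pareto sets that are not dominated (with respect to (f_a, f_b)) by any point of that union. -/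
open Matrix Set

theorem stmt_14 {n ka kb : ℕ} (hka : 0 < ka) (hkb : 0 < kb)
    (fa : Fin ka → (Fin n → ℝ) → ℝ) (fb : Fin kb → (Fin n → ℝ) → ℝ)
    (C : Set (Fin n → ℝ)) (hC : C.Nonempty)
    (hdom : DominationProperty (fun x => ![⨅ i, fa i x, ⨅ j, fb j x]) C) :
    ParetoSet (fun x => ![⨅ i, fa i x, ⨅ j, fb j x]) C =
      ND (fun x => ![⨅ i, fa i x, ⨅ j, fb j x]) C
        (⋃ i, ⋃ j, ParetoSet (fun x => ![fa i x, fb j x]) C) := by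

  haveI : Nonempty (Fin ka) := ⟨⟨0, hka⟩⟩
  haveI : Nonempty (Fin kb) := ⟨⟨0, hkb⟩⟩
  have hsub : ParetoSet (fun x => ![⨅ i, fa i x, ⨅ j, fb j x]) C ⊆
      ⋃ i, ⋃ j, ParetoSet (fun x => ![fa i x, fb j x]) C := by
    rintro x ⟨hxC, hxnd⟩
    obtain ⟨i0, hi0⟩ := Finite.exists_min (fun i => fa i x)
    obtain ⟨j0, hj0⟩ := Finite.exists_min (fun j => fb j x)
    have hia : (⨅ i, fa i x) = fa i0 x :=
      le_antisymm (ciInf_le (Finite.bddBelow_range _) i0) (le_ciInf hi0)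
    have hib : (⨅ j, fb j x) = fb j0 x :=
      le_antisymm (ciInf_le (Finite.bddBelow_range _) j0) (le_ciInf hj0)
    refine mem_iUnion.2 ⟨i0, mem_iUnion.2 ⟨j0, hxC, ?_⟩⟩
    rintro ⟨y, hyC, hle, k, hk⟩
    have h0 := hle 0
    have h1 := hle 1
    simp only [Matrix.cons_val_zero, Matrix.cons_val_one, Matrix.head_cons] at h0 h1
    have ha : (⨅ i, fa i y) ≤ ⨅ i, fa i x := by
      rw [hia]
      exact le_trans (ciInf_le (Finite.bddBelow_range _) i0) h0
    have hb : (⨅ j, fb j y) ≤ ⨅ j, fb j x := by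
      rw [hib]
      exact le_trans (ciInf_le (Finite.bddBelow_range _) j0) h1
    apply hxnd
    refine ⟨y, hyC, ?_, ?_⟩
    · intro m
      fin_cases m <;>
        simp only [Matrix.cons_val_zero, Matrix.cons_val_one, Matrix.head_cons, Fin.isValue]
      · exact ha
      · exact hb
    · refine ⟨k, ?_⟩
      fin_cases k <;>
        simp only [Matrix.cons_val_zero, Matrix.cons_val_one, Matrix.head_cons, Fin.isValue] at hk ⊢
      · rw [hia]
        exact lt_of_le_of_lt (ciInf_le (Finite.bddBelow_range _) i0) hk
      · rw [hib]
        exact lt_of_le_of_lt (ciInf_le (Finite.bddBelow_range _) j0) hk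
  ext x
  constructor
  · intro hx
    exact ⟨⟨hsub hx, hx.1⟩, fun ⟨y, ⟨_, hyC⟩, hd⟩ => hx.2 ⟨y, hyC, hd⟩⟩
  · rintro ⟨⟨hxS, hxC⟩, hxnd⟩
    by_contra hnp
    obtain ⟨z, hz, hzd⟩ := hdom x ⟨hxC, hnp⟩
    exact hxnd ⟨z, ⟨hsub hz, hz.1⟩, hzd⟩
end

section
/- Consider d multipeak inequality constraints g_u(x) = min(g_{u,1}(x), ..., g_{u,l_u}(x)), u = 1, ..., d, and for each subconstraint g_{i,j} define C_{i,j} = {x ∈ ℝ^n : g_{i,j}(x) ≤ 0}. Then the feasible set of the d constraints satisfies C = ⋂_{i=1}^d ⋃_{j=1}^{l_i} C_{i,j} = ⋃_{j_1=1}^{l_1} ⋯ ⋃_{j_d=1}^{l_d} ⋂_{i=1}^d C_{i,j_i}. Moreover, if f : ℝ^n → ℝ^m is an objective function such that the problem (f, C) satisfies the domination property, then PS(f, C) = ND^{(f,C)}( ⋃_{j_1} ⋯ ⋃_{j_d} PS(f, ⋂_{i=1}^d C_{i,j_i}) ): the Pareto set equals the non-dominated points of the union over all subconstraint combinations of the Pareto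 sets of the corresponding subproblems. -/
open Matrix Set

theorem stmt_15 {n m d : ℕ} (l : Fin d → ℕ) (hl : ∀ i, 0 < l i)
    (g : (i : Fin d) → Fin (l i) → (Fin n → ℝ) → ℝ)
    (gm : Fin d → (Fin n → ℝ) → ℝ)
    (hgm : ∀ u x, gm u x = ⨅ j, g u j x)
    (Csub : (i : Fin d) → Fin (l i) → Set (Fin n → ℝ))
    (hCsub : ∀ i j, Csub i j = {x | g i j x ≤ 0})
    (C : Set (Fin n → ℝ)) (hC : C = {x | ∀ u, gm u x ≤ 0})
    (f : (Fin n → ℝ) → Fin m → ℝ)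
    (hdom : DominationProperty f C) :
    (C = ⋂ i, ⋃ j, Csub i j) ∧
      (C = ⋃ J : (i : Fin d) → Fin (l i), ⋂ i, Csub i (J i)) ∧
      ParetoSet f C =
        ND f C (⋃ J : (i : Fin d) → Fin (l i), ParetoSet f (⋂ i, Csub i (J i))) := by
  have hmem : ∀ x u, gm u x ≤ 0 ↔ ∃ j, g u j x ≤ 0 := by
    intro x u
    haveI : Nonempty (Fin (l u)) := ⟨⟨0, hl u⟩⟩
    rw [hgm]
    constructor
    · intro h
      obtain ⟨j, hj⟩ := Finite.exists_min (fun j => g u j x)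
      exact ⟨j, le_trans (le_ciInf hj) h⟩
    · rintro ⟨j, hj⟩
      exact le_trans (ciInf_le (Finite.bddBelow_range _) j) hj
  have part1 : C = ⋂ i, ⋃ j, Csub i j := by
    ext x
    simp only [hC, mem_setOf_eq, mem_iInter, mem_iUnion, hCsub, hmem]
  have part2 : C = ⋃ J : (i : Fin d) → Fin (l i), ⋂ i, Csub i (J i) := by
    rw [part1]; ext x
    simp only [mem_iInter, mem_iUnion]
    constructor
    · intro h; choose J hJ using h; exact ⟨J, hJ⟩
    · rintro ⟨J, hJ⟩ i; exact ⟨J i, hJ i⟩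
  refine ⟨part1, part2, ?_⟩
  have hsub : ∀ J : (i : Fin d) → Fin (l i), (⋂ i, Csub i (J i)) ⊆ C := by
    intro J
    rw [part2]; exact subset_iUnion (fun J => ⋂ i, Csub i (J i)) J
  ext x
  constructor
  · rintro ⟨hxC, hnd⟩
    have hxU : x ∈ ⋃ J : (i : Fin d) → Fin (l i), ⋂ i, Csub i (J i) := part2 ▸ hxC
    obtain ⟨S, ⟨J, rfl⟩, hxS⟩ := hxU
    refine ⟨⟨mem_iUnion.mpr ⟨J, hxS, ?_⟩, hxC⟩, ?_⟩
    · rintro ⟨y, hy, hd⟩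
      exact hnd ⟨y, hsub J hy, hd⟩
    · rintro ⟨y, ⟨_, hyC⟩, hd⟩
      exact hnd ⟨y, hyC, hd⟩
  · rintro ⟨⟨_, hxC⟩, hnd⟩
    refine ⟨hxC, ?_⟩
    rintro ⟨y, hyC, hd⟩
    by_cases hp : x ∈ ParetoSet f C
    · exact hp.2 ⟨y, hyC, hd⟩
    · obtain ⟨z, hz, hzd⟩ := hdom x ⟨hxC, hp⟩
      have hzU : z ∈ ⋃ J : (i : Fin d) → Fin (l i), ⋂ i, Csub i (J i) := part2 ▸ hz.1
      obtain ⟨S, ⟨J, rfl⟩, hzS⟩ := hzU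
      refine hnd ⟨z, ⟨mem_iUnion.mpr ⟨J, hzS, ?_⟩, hz.1⟩, hzd⟩
      rintro ⟨w, hw, hwd⟩
      exact hz.2 ⟨w, hsub J hw, hwd⟩
end

section
/- Let (f, C) be a constrained multiobjective problem with f : ℝ^n → ℝ^m and non-empty feasible set C, whose Pareto set satisfies PS(f, C) = ND^{(f,C)}( ⋃_i PS^i ), where each PS^i is the Pareto set of a subproblem (f, C_i) with feasible set C_i ⊆ C, and where each subproblem has an ideal point I_i ∈ ℝ^m (i.e., for each component j, inf_{x ∈ PS^i} f_j(x) is attained/finite and (I_i)_j = inf_{x ∈ PS^i} f_j(x)). Assume (f, C) satisfies the domination property. Then for each component j, inf_{x ∈ PS(f,C)} f_j(x) = min_{z ∈ I} z_j where I = {I_i}; equivalently, the ideal point of (f, C) equals (min_{z ∈ I} z_1, ..., min_{z ∈ I} z_m). -/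
open Matrix Set

theorem stmt_17 {n m d : ℕ} (hd : 0 < d)
    (f : (Fin n → ℝ) → Fin m → ℝ) (C : Set (Fin n → ℝ)) (hCne : C.Nonempty)
    (Csub : Fin d → Set (Fin n → ℝ)) (hsub : ∀ i, Csub i ⊆ C)
    (hPS : ParetoSet f C = ND f C (⋃ i, ParetoSet f (Csub i)))
    (I : Fin d → Fin m → ℝ)
    (hI : ∀ i j, IsGLB ((fun x => f x j) '' ParetoSet f (Csub i)) (I i j))
    (hdom : DominationProperty f C) :
    ∀ j, IsGLB ((fun x => f x j) '' ParetoSet f C) (⨅ i, I i j) := by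
  intro j
  haveI : Nonempty (Fin d) := ⟨⟨0, hd⟩⟩
  constructor
  · rintro _ ⟨x, hx, rfl⟩
    have hx' := hx
    rw [hPS] at hx'
    obtain ⟨⟨hxS, hxC⟩, _⟩ := hx'
    obtain ⟨_, ⟨i, rfl⟩, hxi⟩ := hxS
    refine le_trans (ciInf_le ?_ i) ((hI i j).1 ⟨x, hxi, rfl⟩)
    exact (Set.finite_range _).bddBelow
  · intro b hb
    refine le_ciInf fun i => (hI i j).2 ?_
    rintro _ ⟨x, hxi, rfl⟩
    have hxC : x ∈ C := hsub i hxi.1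
    by_cases hxP : x ∈ ParetoSet f C
    · exact hb ⟨x, hxP, rfl⟩
    · obtain ⟨z, hzP, hzd⟩ := hdom x ⟨hxC, hxP⟩
      exact le_trans (hb ⟨z, hzP, rfl⟩) (hzd.1 j)
end

section
/- Consider a bi-objective problem with strictly convex-quadratic objectives f_i(x) = (1/2)(x − c_i)ᵀ H_i (x − c_i) + v_i, i = 1, 2 (H_i symmetric positive definite), and a non-empty closed convex feasible set C ⊆ ℝ^n. For i = 1, 2, let p_i be the unique minimizer over C of z ↦ (z − c_i)ᵀ H_i (z − c_i). Then the nadir point of the problem equals (f_1(p_2), f_2(p_1)); that is, sup_{x ∈ PS(f,C)} f_1(x) = f_1(p_2) and sup_{x ∈ PS(f,C)} f_2(x) = f_2(p_1). -/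
open Matrix Set

theorem stmt_19 {n : ℕ} (c : Fin 2 → Fin n → ℝ) (v : Fin 2 → ℝ)
    (H : Fin 2 → Matrix (Fin n) (Fin n) ℝ) (hH : ∀ i, (H i).PosDef)
    (f : (Fin n → ℝ) → Fin 2 → ℝ)
    (hf : ∀ x i, f x i = (1 / 2) * ((x - c i) ⬝ᵥ (H i *ᵥ (x - c i))) + v i)
    (C : Set (Fin n → ℝ)) (hCne : C.Nonempty) (hCclosed : IsClosed C)
    (hCconv : Convex ℝ C)
    (p : Fin 2 → Fin n → ℝ)
    (hp : ∀ i, p i ∈ C ∧ ∀ z ∈ C,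
      (p i - c i) ⬝ᵥ (H i *ᵥ (p i - c i)) ≤ (z - c i) ⬝ᵥ (H i *ᵥ (z - c i)))
    (hpuniq : ∀ i, ∀ z ∈ C,
      (z - c i) ⬝ᵥ (H i *ᵥ (z - c i)) ≤ (p i - c i) ⬝ᵥ (H i *ᵥ (p i - c i)) → z = p i) :
    IsGreatest ((fun x => f x 0) '' ParetoSet f C) (f (p 1) 0) ∧
      IsGreatest ((fun x => f x 1) '' ParetoSet f C) (f (p 0) 1) := by

  have fmin : ∀ i x, x ∈ C → f (p i) i ≤ f x i := by
    intro i x hx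
    rw [hf, hf]
    have := (hp i).2 x hx
    linarith
  have pareto : ∀ i, p i ∈ ParetoSet f C := by
    intro i
    refine ⟨(hp i).1, ?_⟩
    rintro ⟨y, hyC, hle, j, hj⟩
    have hq : (y - c i) ⬝ᵥ (H i *ᵥ (y - c i)) ≤ (p i - c i) ⬝ᵥ (H i *ᵥ (p i - c i)) := by
      have h1 := hle i
      rw [hf, hf] at h1; linarith
    have heq := hpuniq i y hyC hq
    rw [heq] at hj
    exact lt_irrefl _ hj
  constructor
  · constructor
    · exact ⟨p 1, pareto 1, rfl⟩
    · rintro r ⟨x, hx, rfl⟩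
      by_contra h
      push_neg at h
      refine hx.2 ⟨p 1, (hp 1).1, fun k => ?_, 0, h⟩
      fin_cases k
      · exact le_of_lt h
      · exact fmin 1 x hx.1
  · constructor
    · exact ⟨p 0, pareto 0, rfl⟩
    · rintro r ⟨x, hx, rfl⟩
      by_contra h
      push_neg at h
      refine hx.2 ⟨p 0, (hp 0).1, fun k => ?_, 1, h⟩
      fin_cases k
      · exact fmin 0 x hx.1
      · exact le_of_lt h
end
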